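/- Let ξ₁,…,ξ_k be vectors in ℝ^d in general position ((i): no d linearly dependent; (ii): no ω with ⟨ω,ξᵢ⟩ > 0 for all i), with spread characteristics κ₁, κ₂. For a vector z ∈ ℝ^d with strictly positive coordinates, let δ(z) = maxᵢ z^i / minᵢ z^i, and let κ₁(z), κ₂(z) denote the corresponding characteristics of the coordinate-wise rescaled family {z∘ξ₁,…,z∘ξ_k} (where (z∘ξ)^i = z^i ξ^i). Then κ₁(z) ≥ |z| κ₁ / (d δ(z)) and κ₂(z) ≥ |z| κ₂ / (√d δ(z)). -/

import Mathlib

noncomputable section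

/-- Standard inner product on ℝ^n. -/
def dotp {n : ℕ} (u v : Fin n → ℝ) : ℝ := ∑ i, u i * v i

/-- Euclidean norm on ℝ^n. -/
def euclNorm {n : ℕ} (u : Fin n → ℝ) : ℝ := Real.sqrt (∑ i, (u i) ^ 2)

/-- Euclidean distance from the origin to the affine subspace spanned by the set `s`. -/
def distOrigAffine {n : ℕ} (s : Set (Fin n → ℝ)) : ℝ :=
  sInf (euclNorm '' (affineSpan ℝ s : Set (Fin n → ℝ)))

/-- κ₁: the minimum, over subfamilies I not satisfying condition (ii), of the largest κ
such that some unit vector ω satisfies ⟨ξᵢ,ω⟩ ≥ κ for all i ∈ I. -/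
def kappa1 (k n : ℕ) (ξ : Fin k → (Fin n → ℝ)) : ℝ :=
  sInf { c : ℝ | ∃ I : Finset (Fin k), I.Nonempty ∧
    (∃ ω, ∀ i ∈ I, 0 < dotp ω (ξ i)) ∧
    IsGreatest { κ : ℝ | ∃ ω, euclNorm ω = 1 ∧ ∀ i ∈ I, κ ≤ dotp (ξ i) ω } c }

/-- κ₂: the minimum, over subfamilies of size n, of the distance from the origin to the
affine hyperplane through their endpoints. -/
def kappa2 (k n : ℕ) (ξ : Fin k → (Fin n → ℝ)) : ℝ :=
  sInf { c : ℝ | ∃ I : Finset (Fin k), I.card = n ∧ c = distOrigAffine (ξ '' I) }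

/- ### auxiliary lemmas -/

lemma euclNorm_nonneg {n : ℕ} (u : Fin n → ℝ) : 0 ≤ euclNorm u := Real.sqrt_nonneg _

lemma continuous_euclNorm {n : ℕ} : Continuous (euclNorm (n := n)) := by
  unfold euclNorm
  exact Real.continuous_sqrt.comp (by continuity)

lemma continuous_dotp {n : ℕ} (v : Fin n → ℝ) : Continuous (fun w => dotp v w) := by
  unfold dotp; continuity

lemma euclNorm_smul_ge {n : ℕ} (z w : Fin n → ℝ) (c : ℝ) (hc : 0 ≤ c)
    (h : ∀ j, c ≤ |z j|) : c * euclNorm w ≤ euclNorm (fun j => z j * w j) := by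
  unfold euclNorm
  rw [show c * Real.sqrt (∑ i, w i ^ 2) = Real.sqrt (c ^ 2 * ∑ i, w i ^ 2) by
    rw [Real.sqrt_mul (by positivity), Real.sqrt_sq hc]]
  apply Real.sqrt_le_sqrt
  rw [Finset.mul_sum]
  apply Finset.sum_le_sum
  intro i _
  have h1 : c ^ 2 ≤ (z i) ^ 2 := by
    have := h i
    nlinarith [abs_nonneg (z i), sq_abs (z i)]
  have : 0 ≤ w i ^ 2 := sq_nonneg _
  calc c ^ 2 * w i ^ 2 ≤ z i ^ 2 * w i ^ 2 := by nlinarith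
    _ = (z i * w i) ^ 2 := by ring

lemma euclNorm_le_sqrt_mul {n : ℕ} (z : Fin n → ℝ) (M : ℝ) (hM : 0 ≤ M)
    (h : ∀ j, |z j| ≤ M) : euclNorm z ≤ Real.sqrt n * M := by
  unfold euclNorm
  rw [show Real.sqrt n * M = Real.sqrt (n * M ^ 2) by
    rw [Real.sqrt_mul (by positivity), Real.sqrt_sq hM]]
  apply Real.sqrt_le_sqrt
  calc ∑ i, z i ^ 2 ≤ ∑ _i : Fin n, M ^ 2 := by
        apply Finset.sum_le_sum; intro i _
        have := h i; nlinarith [abs_nonneg (z i), sq_abs (z i)]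
    _ = n * M ^ 2 := by simp [Finset.sum_const, mul_comm]

lemma sphere_compact {n : ℕ} : IsCompact {ω : Fin n → ℝ | euclNorm ω = 1} := by
  rw [Metric.isCompact_iff_isClosed_bounded]
  constructor
  · exact isClosed_eq continuous_euclNorm continuous_const
  · rw [Metric.isBounded_iff_subset_closedBall 0]
    refine ⟨1, fun ω hω => ?_⟩
    simp only [Set.mem_setOf_eq] at hω
    rw [Metric.mem_closedBall, dist_zero_right]
    rw [pi_norm_le_iff_of_nonneg zero_le_one]
    intro j
    rw [Real.norm_eq_abs, ← Real.sqrt_sq_eq_abs]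
    calc Real.sqrt ((ω j)^2) ≤ Real.sqrt (∑ i, (ω i)^2) := by
          apply Real.sqrt_le_sqrt
          exact Finset.single_le_sum (fun i _ => sq_nonneg (ω i)) (Finset.mem_univ j)
      _ = 1 := hω

lemma sphere_nonempty {n : ℕ} (hn : 0 < n) :
    ∃ ω : Fin n → ℝ, euclNorm ω = 1 := by
  refine ⟨fun j => if j = ⟨0, hn⟩ then 1 else 0, ?_⟩
  unfold euclNorm
  have : (∑ i : Fin n, (if i = (⟨0, hn⟩ : Fin n) then (1:ℝ) else 0)^2) = 1 := by
    rw [Finset.sum_eq_single (⟨0, hn⟩ : Fin n)]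
    · simp
    · intro b _ hb; simp [hb]
    · simp
  rw [this]; exact Real.sqrt_one

lemma exists_isGreatest {d k : ℕ} (hd : 0 < d) (ξ : Fin k → Fin d → ℝ)
    (I : Finset (Fin k)) (hI : I.Nonempty) :
    ∃ M, IsGreatest { κ : ℝ | ∃ ω, euclNorm ω = 1 ∧ ∀ i ∈ I, κ ≤ dotp (ξ i) ω } M := by
  obtain ⟨ω₀, hω₀⟩ := sphere_nonempty hd
  have hcont : Continuous (fun ω : Fin d → ℝ => I.inf' hI (fun i => dotp (ξ i) ω)) := by
    apply continuous_iff_continuousAt.2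
    intro x
    exact ContinuousAt.finset_inf'_apply hI (fun i _ => (continuous_dotp (ξ i)).continuousAt)
  obtain ⟨x, hx, hmax⟩ := sphere_compact.exists_isMaxOn ⟨ω₀, hω₀⟩ hcont.continuousOn
  refine ⟨I.inf' hI (fun i => dotp (ξ i) x), ⟨x, hx, fun i hi => Finset.inf'_le _ hi⟩, ?_⟩
  rintro κ ⟨ω, hω, hκ⟩
  calc κ ≤ I.inf' hI (fun i => dotp (ξ i) ω) := Finset.le_inf' _ _ (fun i hi => hκ i hi)
    _ ≤ _ := hmax hω

lemma dotp_comm {n : ℕ} (u v : Fin n → ℝ) : dotp u v = dotp v u := by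
  unfold dotp; exact Finset.sum_congr rfl (fun i _ => mul_comm _ _)

lemma dotp_smul {n : ℕ} (c : ℝ) (u v : Fin n → ℝ) :
    dotp u (c • v) = c * dotp u v := by
  unfold dotp; rw [Finset.mul_sum]
  exact Finset.sum_congr rfl (fun i _ => by simp [Pi.smul_apply, smul_eq_mul]; ring)

lemma euclNorm_smul {n : ℕ} (c : ℝ) (u : Fin n → ℝ) :
    euclNorm (c • u) = |c| * euclNorm u := by
  unfold euclNorm
  rw [show (∑ i, (c • u) i ^ 2) = c ^ 2 * ∑ i, u i ^ 2 by
    rw [Finset.mul_sum]; exact Finset.sum_congr rfl (fun i _ => by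
      simp [Pi.smul_apply, smul_eq_mul]; ring)]
  rw [Real.sqrt_mul (sq_nonneg c), Real.sqrt_sq_eq_abs]

lemma euclNorm_pos {n : ℕ} (u : Fin n → ℝ) (hu : u ≠ 0) : 0 < euclNorm u := by
  obtain ⟨j, hj⟩ := Function.ne_iff.1 hu
  unfold euclNorm
  apply Real.sqrt_pos.2
  have hj' : u j ≠ 0 := by simpa using hj
  have h1 : 0 < u j ^ 2 := pow_two_pos_of_ne_zero hj'
  calc (0:ℝ) < u j ^ 2 := h1
    _ ≤ ∑ i, u i ^ 2 := Finset.single_le_sum (fun i _ => sq_nonneg (u i)) (Finset.mem_univ j)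

lemma dotp_self_pos {n : ℕ} (u : Fin n → ℝ) (hu : u ≠ 0) : 0 < dotp u u := by
  obtain ⟨j, hj⟩ := Function.ne_iff.1 hu
  unfold dotp
  have hj' : u j ≠ 0 := by simpa using hj
  have h1 : 0 < u j * u j := mul_self_pos.2 hj'
  calc (0:ℝ) < u j * u j := h1
    _ ≤ ∑ i, u i * u i := Finset.single_le_sum (fun i _ => mul_self_nonneg (u i)) (Finset.mem_univ j)

/- ### the sets appearing in kappa1 / kappa2 -/

def k1set (k n : ℕ) (ξ : Fin k → (Fin n → ℝ)) : Set ℝ :=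
  { c : ℝ | ∃ I : Finset (Fin k), I.Nonempty ∧
    (∃ ω, ∀ i ∈ I, 0 < dotp ω (ξ i)) ∧
    IsGreatest { κ : ℝ | ∃ ω, euclNorm ω = 1 ∧ ∀ i ∈ I, κ ≤ dotp (ξ i) ω } c }

lemma kappa1_eq (k n : ℕ) (ξ : Fin k → (Fin n → ℝ)) :
    kappa1 k n ξ = sInf (k1set k n ξ) := rfl

lemma k1set_nonneg {k n : ℕ} (ξ : Fin k → (Fin n → ℝ)) :
    ∀ c ∈ k1set k n ξ, 0 ≤ c := by
  rintro c ⟨I, hIne, ⟨ω, hωp⟩, hG⟩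
  have hω0 : ω ≠ 0 := by
    obtain ⟨i, hi⟩ := hIne
    intro h
    have h2 := hωp i hi
    rw [h] at h2
    simp [dotp] at h2
  have hn : 0 < euclNorm ω := euclNorm_pos ω hω0
  have hu : euclNorm ((euclNorm ω)⁻¹ • ω) = 1 := by
    rw [euclNorm_smul, abs_of_pos (by positivity), inv_mul_cancel₀ (ne_of_gt hn)]
  have hmem : (I.inf' hIne fun i => dotp (ξ i) ((euclNorm ω)⁻¹ • ω)) ∈
      { κ : ℝ | ∃ ω', euclNorm ω' = 1 ∧ ∀ i ∈ I, κ ≤ dotp (ξ i) ω' } :=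
    ⟨(euclNorm ω)⁻¹ • ω, hu, fun i hi => Finset.inf'_le _ hi⟩
  have hpos : 0 < I.inf' hIne fun i => dotp (ξ i) ((euclNorm ω)⁻¹ • ω) := by
    rw [Finset.lt_inf'_iff]
    intro i hi
    rw [dotp_smul]
    exact mul_pos (inv_pos.2 hn) (by rw [dotp_comm]; exact hωp i hi)
  exact le_of_lt (lt_of_lt_of_le hpos (hG.2 hmem))

lemma kappa1_nonneg (k n : ℕ) (ξ : Fin k → (Fin n → ℝ)) : 0 ≤ kappa1 k n ξ :=
  Real.sInf_nonneg (k1set_nonneg ξ)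

lemma kappa1_le {k n : ℕ} {ξ : Fin k → (Fin n → ℝ)} {c : ℝ} (h : c ∈ k1set k n ξ) :
    kappa1 k n ξ ≤ c :=
  csInf_le ⟨0, fun x hx => k1set_nonneg ξ x hx⟩ h

def k2set (k n : ℕ) (ξ : Fin k → (Fin n → ℝ)) : Set ℝ :=
  { c : ℝ | ∃ I : Finset (Fin k), I.card = n ∧ c = distOrigAffine (ξ '' I) }

lemma kappa2_eq (k n : ℕ) (ξ : Fin k → (Fin n → ℝ)) :
    kappa2 k n ξ = sInf (k2set k n ξ) := rfl

lemma distOrigAffine_nonneg {n : ℕ} (s : Set (Fin n → ℝ)) : 0 ≤ distOrigAffine s :=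
  Real.sInf_nonneg (by rintro x ⟨q, _, rfl⟩; exact euclNorm_nonneg q)

lemma kappa2_nonneg (k n : ℕ) (ξ : Fin k → (Fin n → ℝ)) : 0 ≤ kappa2 k n ξ :=
  Real.sInf_nonneg (by rintro c ⟨I, _, rfl⟩; exact distOrigAffine_nonneg _)

lemma kappa2_le {k n : ℕ} {ξ : Fin k → (Fin n → ℝ)} {c : ℝ} (h : c ∈ k2set k n ξ) :
    kappa2 k n ξ ≤ c :=
  csInf_le ⟨0, by rintro x ⟨I, _, rfl⟩; exact distOrigAffine_nonneg _⟩ h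

def scaleMap {n : ℕ} (z : Fin n → ℝ) : (Fin n → ℝ) →ₗ[ℝ] (Fin n → ℝ) where
  toFun w := fun j => z j * w j
  map_add' u v := by funext j; simp [mul_add]
  map_smul' c u := by funext j; simp [Pi.smul_apply, smul_eq_mul]; ring

theorem stmt13 (d k : ℕ) (ξ : Fin k → (Fin d → ℝ))
    (hne : ∀ i, ξ i ≠ 0)
    -- (i): no d of the vectors are linearly dependent
    (hi : ∀ s : Finset (Fin k), s.card = d → LinearIndependent ℝ (fun i : s => ξ i))
    -- (ii): no ω has positive inner product with all the ξᵢ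
    (hii : ¬ ∃ ω : Fin d → ℝ, ∀ i, 0 < dotp ω (ξ i))
    (z : Fin d → ℝ) (hz : ∀ i, 0 < z i) :
    let δ : ℝ := (⨆ i, z i) / (⨅ i, z i)
    let zξ : Fin k → (Fin d → ℝ) := fun i j => z j * ξ i j
    euclNorm z * kappa1 k d ξ / (d * δ) ≤ kappa1 k d zξ ∧
    euclNorm z * kappa2 k d ξ / (Real.sqrt d * δ) ≤ kappa2 k d zξ := by
  intro δ zξ
  have hδdef : δ = (⨆ i, z i) / (⨅ i, z i) := rfl
  have hzξ : ∀ i, zξ i = fun j => z j * ξ i j := fun _ => rfl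
  have hk : 0 < k := by
    rcases Nat.eq_zero_or_pos k with h | h
    · exfalso; subst h; exact hii ⟨0, fun i => i.elim0⟩
    · exact h
  have hd : 0 < d := by
    rcases Nat.eq_zero_or_pos d with h | h
    · exfalso; apply hne ⟨0, hk⟩; subst h; funext j; exact j.elim0
    · exact h
  haveI : Nonempty (Fin d) := ⟨⟨0, hd⟩⟩
  have hmle : ∀ i, (⨅ i, z i) ≤ z i := fun i => ciInf_le (Set.Finite.bddBelow (Set.finite_range z)) i
  have hleM : ∀ i, z i ≤ ⨆ i, z i := fun i => le_ciSup (Set.Finite.bddAbove (Set.finite_range z)) i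
  have hmpos : 0 < ⨅ i, z i := by
    obtain ⟨a, ha⟩ := Finite.exists_min z
    exact lt_of_lt_of_le (hz a) (le_ciInf ha)
  have hMpos : 0 < ⨆ i, z i := lt_of_lt_of_le (hz ⟨0, hd⟩) (hleM _)
  have hδpos : 0 < δ := by rw [hδdef]; exact div_pos hMpos hmpos
  have hdR : (0:ℝ) < d := by exact_mod_cast hd
  have hsd : (0:ℝ) < Real.sqrt d := Real.sqrt_pos.2 hdR
  have hzM : euclNorm z ≤ Real.sqrt d * (⨆ i, z i) :=
    euclNorm_le_sqrt_mul z _ hMpos.le (fun j => by rw [abs_of_pos (hz j)]; exact hleM j)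
  have h1d : (1:ℝ) ≤ d := by exact_mod_cast hd
  have hsdd : Real.sqrt d ≤ (d:ℝ) := by
    calc Real.sqrt d ≤ Real.sqrt ((d:ℝ)^2) := Real.sqrt_le_sqrt (by nlinarith)
      _ = d := Real.sqrt_sq (by positivity)
  have hkey2 : euclNorm z / (Real.sqrt d * δ) ≤ ⨅ i, z i := by
    rw [div_le_iff₀ (by positivity)]
    calc euclNorm z ≤ Real.sqrt d * (⨆ i, z i) := hzM
      _ = (⨅ i, z i) * (Real.sqrt d * δ) := by
          rw [hδdef]; field_simp
  have hkey1 : euclNorm z / (d * δ) ≤ ⨅ i, z i := by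
    rw [div_le_iff₀ (by positivity)]
    calc euclNorm z ≤ Real.sqrt d * (⨆ i, z i) := hzM
      _ ≤ (d:ℝ) * (⨆ i, z i) := mul_le_mul_of_nonneg_right hsdd hMpos.le
      _ = (⨅ i, z i) * ((d:ℝ) * δ) := by
          rw [hδdef]; field_simp
  constructor
  · -- kappa1
    rw [show kappa1 k d zξ = sInf (k1set k d zξ) from rfl]
    have hzξne : ∀ i, zξ i ≠ 0 := by
      intro i h
      apply hne i
      funext j
      have h2 := congrFun h j
      rw [hzξ i] at h2
      simp only [Pi.zero_apply] at h2 ⊢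
      rcases mul_eq_zero.1 h2 with h3 | h3
      · exact absurd h3 (ne_of_gt (hz j))
      · exact h3
    have hSzne : (k1set k d zξ).Nonempty := by
      obtain ⟨M₀, hG₀⟩ := exists_isGreatest hd zξ {⟨0, hk⟩} (Finset.singleton_nonempty _)
      refine ⟨M₀, {⟨0, hk⟩}, Finset.singleton_nonempty _, ⟨zξ ⟨0, hk⟩, ?_⟩, hG₀⟩
      intro i hi
      rw [Finset.mem_singleton] at hi
      subst hi
      exact dotp_self_pos _ (hzξne _)
    apply le_csInf hSzne
    rintro c ⟨I, hIne, ⟨ω, hωp⟩, hGz⟩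
    have hc0 : 0 ≤ c := k1set_nonneg zξ c ⟨I, hIne, ⟨ω, hωp⟩, hGz⟩
    obtain ⟨M, hGM⟩ := exists_isGreatest hd ξ I hIne
    have hMmem : M ∈ k1set k d ξ := by
      refine ⟨I, hIne, ⟨fun j => z j * ω j, fun i hi => ?_⟩, hGM⟩
      have heq : dotp (fun j => z j * ω j) (ξ i) = dotp ω (zξ i) := by
        unfold dotp
        refine Finset.sum_congr rfl (fun j _ => ?_)
        rw [hzξ i]
        ring
      rw [heq]
      exact hωp i hi
    have hk1M : kappa1 k d ξ ≤ M := kappa1_le hMmem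
    obtain ⟨ω₁, hω₁, hMle⟩ := hGM.1
    have hω₁0 : ω₁ ≠ 0 := by
      intro h
      rw [h] at hω₁
      simp [euclNorm] at hω₁
    have hw0 : (fun j => ω₁ j / z j) ≠ 0 := by
      intro h
      apply hω₁0
      funext j
      have h2 : ω₁ j / z j = 0 := congrFun h j
      show ω₁ j = 0
      rcases div_eq_zero_iff.1 h2 with h3 | h3
      · exact h3
      · exact absurd h3 (ne_of_gt (hz j))
    have hnw : 0 < euclNorm (fun j => ω₁ j / z j) := euclNorm_pos _ hw0
    have hunit : euclNorm ((euclNorm (fun j => ω₁ j / z j))⁻¹ • (fun j => ω₁ j / z j)) = 1 := by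
      rw [euclNorm_smul, abs_of_pos (by positivity), inv_mul_cancel₀ (ne_of_gt hnw)]
    have hmemz : M / euclNorm (fun j => ω₁ j / z j) ∈
        { κ : ℝ | ∃ ω', euclNorm ω' = 1 ∧ ∀ i ∈ I, κ ≤ dotp (zξ i) ω' } := by
      refine ⟨_, hunit, fun i hi => ?_⟩
      rw [dotp_smul]
      have hdw : dotp (zξ i) (fun j => ω₁ j / z j) = dotp (ξ i) ω₁ := by
        unfold dotp
        refine Finset.sum_congr rfl (fun j _ => ?_)
        rw [hzξ i]
        have hzj : z j ≠ 0 := ne_of_gt (hz j)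
        field_simp
      rw [hdw, div_eq_inv_mul]
      exact mul_le_mul_of_nonneg_left (hMle i hi) (inv_nonneg.2 hnw.le)
    have hMc : M / euclNorm (fun j => ω₁ j / z j) ≤ c := hGz.2 hmemz
    have hMc' : M ≤ c * euclNorm (fun j => ω₁ j / z j) := (div_le_iff₀ hnw).1 hMc
    have hwm : euclNorm (fun j => ω₁ j / z j) * (⨅ i, z i) ≤ 1 := by
      have h5 := euclNorm_smul_ge z (fun j => ω₁ j / z j) (⨅ i, z i) hmpos.le
        (fun j => by rw [abs_of_pos (hz j)]; exact hmle j)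
      have h6 : (fun j => z j * (ω₁ j / z j)) = ω₁ := by
        funext j
        exact mul_div_cancel₀ (ω₁ j) (ne_of_gt (hz j))
      rw [h6, hω₁] at h5
      linarith [h5]
    calc euclNorm z * kappa1 k d ξ / (↑d * δ)
        = kappa1 k d ξ * (euclNorm z / (↑d * δ)) := by ring
      _ ≤ kappa1 k d ξ * (⨅ i, z i) := mul_le_mul_of_nonneg_left hkey1 (kappa1_nonneg k d ξ)
      _ ≤ M * (⨅ i, z i) := mul_le_mul_of_nonneg_right hk1M hmpos.le
      _ ≤ (c * euclNorm (fun j => ω₁ j / z j)) * (⨅ i, z i) :=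
          mul_le_mul_of_nonneg_right hMc' hmpos.le
      _ = c * (euclNorm (fun j => ω₁ j / z j) * (⨅ i, z i)) := by ring
      _ ≤ c * 1 := mul_le_mul_of_nonneg_left hwm hc0
      _ = c := mul_one c
  · -- kappa2
    by_cases hEx : ∃ I : Finset (Fin k), I.card = d
    · rw [show kappa2 k d zξ = sInf (k2set k d zξ) from rfl]
      apply le_csInf
      · obtain ⟨I₀, hI₀⟩ := hEx
        exact ⟨_, I₀, hI₀, rfl⟩
      rintro c ⟨I, hIcard, rfl⟩
      have hIne : (↑I : Set (Fin k)).Nonempty := by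
        have h7 : I.Nonempty := Finset.card_pos.1 (by rw [hIcard]; exact hd)
        exact ⟨h7.choose, h7.choose_spec⟩
      have hk2w : kappa2 k d ξ ≤ distOrigAffine (ξ '' ↑I) := kappa2_le ⟨I, hIcard, rfl⟩
      have himg : zξ '' (↑I : Set (Fin k)) = ⇑(scaleMap z).toAffineMap '' (ξ '' ↑I) := by
        rw [← Set.image_comp]
        exact Set.image_congr' (fun i => rfl)
      have hspan : (affineSpan ℝ (zξ '' (↑I : Set (Fin k))) : Set (Fin d → ℝ)) =
          ((affineSpan ℝ (ξ '' ↑I)).map (scaleMap z).toAffineMap : Set (Fin d → ℝ)) := by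
        rw [himg, ← AffineSubspace.map_span]
      have hlow : ∀ x ∈ euclNorm '' (affineSpan ℝ (zξ '' (↑I : Set (Fin k))) : Set (Fin d → ℝ)),
          distOrigAffine (ξ '' ↑I) * (⨅ i, z i) ≤ x := by
        rintro x ⟨q, hq, rfl⟩
        rw [hspan] at hq
        obtain ⟨p, hp, rfl⟩ := AffineSubspace.mem_map.1 hq
        have hwp : distOrigAffine (ξ '' ↑I) ≤ euclNorm p :=
          csInf_le ⟨0, by rintro y ⟨r, _, rfl⟩; exact euclNorm_nonneg r⟩ ⟨p, hp, rfl⟩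
        have h8 := euclNorm_smul_ge z p (⨅ i, z i) hmpos.le
          (fun j => by rw [abs_of_pos (hz j)]; exact hmle j)
        calc distOrigAffine (ξ '' ↑I) * (⨅ i, z i)
            ≤ euclNorm p * (⨅ i, z i) := mul_le_mul_of_nonneg_right hwp hmpos.le
          _ = (⨅ i, z i) * euclNorm p := mul_comm _ _
          _ ≤ euclNorm (fun j => z j * p j) := h8
          _ = euclNorm ((scaleMap z).toAffineMap p) := rfl
      have hne2 : (euclNorm '' (affineSpan ℝ (zξ '' (↑I : Set (Fin k))) : Set (Fin d → ℝ))).Nonempty := by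
        obtain ⟨i, hi⟩ := hIne
        exact ⟨euclNorm (zξ i), zξ i, subset_affineSpan ℝ _ ⟨i, hi, rfl⟩, rfl⟩
      have hwm2 : distOrigAffine (ξ '' ↑I) * (⨅ i, z i) ≤ distOrigAffine (zξ '' ↑I) :=
        le_csInf hne2 hlow
      calc euclNorm z * kappa2 k d ξ / (Real.sqrt d * δ)
          = kappa2 k d ξ * (euclNorm z / (Real.sqrt d * δ)) := by ring
        _ ≤ kappa2 k d ξ * (⨅ i, z i) := mul_le_mul_of_nonneg_left hkey2 (kappa2_nonneg k d ξ)
        _ ≤ distOrigAffine (ξ '' ↑I) * (⨅ i, z i) := mul_le_mul_of_nonneg_right hk2w hmpos.le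
        _ ≤ distOrigAffine (zξ '' ↑I) := hwm2
    · have h1 : kappa2 k d ξ = 0 := by
        rw [kappa2_eq]
        have hempty : k2set k d ξ = ∅ := by
          rw [Set.eq_empty_iff_forall_notMem]
          rintro c ⟨I, hI, -⟩
          exact hEx ⟨I, hI⟩
        rw [hempty, Real.sInf_empty]
      rw [h1]
      have := kappa2_nonneg k d zξ
      simpa using this
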